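/- arXiv:1709.08769 — 3 statements merged into one kernel-verified Lean document; each statement's English description precedes it below -/
import Mathlib

section
/- Let l and m be integers with 1 ≤ l and 2l ≤ m − 1 (so that m − 2l ≥ 1). Then Σ_{i=0}^{l−1} (−1)^i · ((m − 2l + 2i)/(m − 2l + i)) · binom(m − 2l + i, i) = (−1)^{l−1} · binom(m − l − 1, l − 1), an identity in the rational numbers. -/
lemma aux_step (n L : ℕ) (hn : 1 ≤ n) (hL : 1 ≤ L) :
    ((n : ℚ) + 2*L)/((n:ℚ)+L) * (Nat.choose (n+L) L : ℚ)
      = (Nat.choose (n+L) L : ℚ) + (Nat.choose (n+L-1) (L-1) : ℚ) := by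
  have key : (n+L) * Nat.choose (n+L-1) (L-1) = Nat.choose (n+L) L * L := by
    have := Nat.add_one_mul_choose_eq (n+L-1) (L-1)
    have h1 : n + L - 1 + 1 = n + L := by omega
    have h2 : L - 1 + 1 = L := by omega
    simp only [Nat.succ_eq_add_one, h1, h2] at this
    linarith
  have hne : ((n:ℚ)+L) ≠ 0 := by positivity
  have keyQ : ((n:ℚ)+L) * (Nat.choose (n+L-1) (L-1) : ℚ) = (Nat.choose (n+L) L : ℚ) * L := by
    exact_mod_cast congrArg (Nat.cast : ℕ → ℚ) key
  field_simp
  nlinarith [keyQ]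

lemma aux_sum (n : ℕ) (hn : 1 ≤ n) (L : ℕ) (hL : 1 ≤ L) :
    ∑ i ∈ Finset.range L, (-1:ℚ)^i * (((n:ℚ) + 2*i)/((n:ℚ)+i)) * (Nat.choose (n+i) i : ℚ)
      = (-1:ℚ)^(L-1) * (Nat.choose (n+L-1) (L-1) : ℚ) := by
  induction L with
  | zero => omega
  | succ L ih =>
    rcases Nat.eq_or_lt_of_le hL with h1 | h1
    · have : L = 0 := by omega
      subst this
      simp
      have : (n:ℚ) ≠ 0 := by positivity
      omega
    · have hL1 : 1 ≤ L := by omega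
      rw [Finset.sum_range_succ, ih hL1]
      have := aux_step n L hn hL1
      have hs : n + (L+1) - 1 = n + L := by omega
      have hs2 : L + 1 - 1 = L := by omega
      rw [hs, hs2]
      rw [mul_assoc ((-1:ℚ)^L), this]
      have hLe : (-1:ℚ)^(L-1) = (-1:ℚ)^(L+1) := by
        have : L - 1 + 2 = L + 1 := by omega
        rw [← this, pow_add]; ring
      rw [hLe]
      ring

/-- Lemma 3.2 (second part): for integers `l, m` with `1 ≤ l` and `2l ≤ m - 1`,
`∑_{i=0}^{l-1} (-1)^i · ((m-2l+2i)/(m-2l+i)) · binom(m-2l+i, i)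
  = (-1)^{l-1} · binom(m-l-1, l-1)` in the rational numbers. -/
theorem sum_alternating_ratio_binom_special (l m : ℤ) (hl : 1 ≤ l) (hlm : 2 * l ≤ m - 1) :
    ∑ i ∈ Finset.range l.toNat,
      (-1 : ℚ) ^ i * (((m : ℚ) - 2 * l + 2 * i) / ((m : ℚ) - 2 * l + i)) *
        (Nat.choose (m - 2 * l + i).toNat i : ℚ)
      = (-1 : ℚ) ^ (l.toNat - 1) * (Nat.choose (m - l - 1).toNat (l - 1).toNat : ℚ) := by
  set n := (m - 2*l).toNat with hn
  have hn1 : 1 ≤ n := by omega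
  have hnval : (m - 2*l : ℤ) = n := by omega
  set L := l.toNat with hLd
  have hL1 : 1 ≤ L := by omega
  have hcast : ((m:ℚ) - 2*l) = n := by
    have : ((m - 2*l : ℤ) : ℚ) = (n : ℚ) := by exact_mod_cast congrArg (Int.cast : ℤ → ℚ) hnval
    push_cast at this ⊢
    linarith
  have h1 : (m - l - 1).toNat = n + L - 1 := by omega
  have h2 : (l - 1).toNat = L - 1 := by omega
  rw [h1, h2]
  have := aux_sum n hn1 L hL1
  rw [← this]
  apply Finset.sum_congr rfl
  intro i hi
  have h3 : (m - 2*l + i).toNat = n + i := by omega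
  rw [h3, hcast]
end

section
/- Let n > 2 be an even integer. Then in the polynomial ring ℚ[x, y] the identity Σ_{i=1}^{(n−2)/2} Σ_{j=0}^{(n−2i)/2} (−1)^j · ((n − 2i)/(n − 2i − j)) · binom(n − 2i − j, j) · x^{i+j} y^{n−2i−2j} + x^{n/2} = Σ_{l=1}^{n/2} (−1)^{l−1} · binom(n − l − 1, l − 1) · x^{l} y^{n−2l} holds. -/
open MvPolynomial

private noncomputable def Aa (n i j : ℕ) : MvPolynomial (Fin 2) ℚ :=
  C ((-1 : ℚ) ^ j * (Nat.choose (n - 2*i - j) j : ℚ)) * X 0 ^ (i + j) * X 1 ^ (n - 2*i - 2*j)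

private lemma choose_ratio (d j : ℕ) (hd : 1 ≤ d) (hj : 1 ≤ j) :
    (((d : ℚ) + j) / d) * (Nat.choose d j : ℚ)
      = (Nat.choose d j : ℚ) + (Nat.choose (d - 1) (j - 1) : ℚ) := by
  obtain ⟨d', rfl⟩ : ∃ d', d = d' + 1 := ⟨d - 1, by omega⟩
  obtain ⟨j', rfl⟩ : ∃ j', j = j' + 1 := ⟨j - 1, by omega⟩
  have hd0 : ((d' + 1 : ℕ) : ℚ) ≠ 0 := by positivity
  have key : (d' + 1) * Nat.choose d' j' = Nat.choose (d' + 1) (j' + 1) * (j' + 1) :=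
    Nat.add_one_mul_choose_eq d' j'
  have keyQ : ((d' : ℚ) + 1) * Nat.choose d' j'
      = (Nat.choose (d' + 1) (j' + 1) : ℚ) * ((j' : ℚ) + 1) := by
    exact_mod_cast congrArg (Nat.cast : ℕ → ℚ) key
  simp only [Nat.add_sub_cancel]
  rw [div_mul_eq_mul_div, div_eq_iff hd0]
  push_cast
  linear_combination -keyQ

private lemma term_split (n i j : ℕ) (h1 : 1 ≤ i) (h2 : 2*i + 2*j ≤ n) (h3 : 2*i + 2 ≤ n) :
    C ((-1 : ℚ) ^ j * (((n : ℚ) - 2 * i) / ((n : ℚ) - 2 * i - j)) *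
          (Nat.choose (n - 2 * i - j) j : ℚ)) *
        X 0 ^ (i + j) * X 1 ^ (n - 2 * i - 2 * j)
      = Aa n i j - (if j = 0 then 0 else Aa n (i+1) (j-1)) := by
  have hd : 1 ≤ n - 2*i - j := by omega
  have hcast1 : ((n : ℚ) - 2 * i) = ((n - 2*i : ℕ) : ℚ) := by
    have : 2*i ≤ n := by omega
    push_cast [this]; ring
  rcases Nat.eq_zero_or_pos j with hj | hj
  · subst hj
    rw [if_pos rfl, sub_zero, Aa]
    have hne : ((n : ℚ) - 2 * i) ≠ 0 := by
      rw [hcast1]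
      exact_mod_cast (by omega : n - 2*i ≠ 0)
    simp only [Nat.cast_zero, sub_zero, div_self hne, mul_one]
  · rw [if_neg (by omega)]
    have hcast2 : ((n - 2*i : ℕ) : ℚ) - j = ((n - 2*i - j : ℕ) : ℚ) := by
      have h'' : j ≤ n - 2*i := by omega
      push_cast [h'']; ring
    have e1 : i + 1 + (j - 1) = i + j := by omega
    have e2 : n - 2*(i+1) - 2*(j-1) = n - 2*i - 2*j := by omega
    have e3 : n - 2*(i+1) - (j-1) = (n - 2*i - j) - 1 := by omega
    have e4 : ((n - 2*i : ℕ) : ℚ) = ((n - 2*i - j : ℕ) : ℚ) + j := by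
      rw [← Nat.cast_add]
      congr 1
      omega
    rw [Aa, Aa, e1, e2, e3, ← sub_mul, ← sub_mul, ← map_sub]
    congr 2
    rw [hcast1, hcast2, e4, mul_assoc ((-1 : ℚ) ^ j), choose_ratio (n - 2*i - j) j hd hj]
    have hsgn : ((-1 : ℚ)) ^ (j - 1) * (-1) = (-1) ^ j := by
      rw [← pow_succ]
      congr 1
      omega
    rw [← hsgn]
    ring

/-- The polynomial identity in `ℚ[x, y]` (with `x = X 0`, `y = X 1` in `MvPolynomial (Fin 2) ℚ`)
used in the proof of Lemma 3.3(3): for `n > 2` even,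
`∑_{i=1}^{(n-2)/2} ∑_{j=0}^{(n-2i)/2} (-1)^j ((n-2i)/(n-2i-j)) binom(n-2i-j, j) x^{i+j} y^{n-2i-2j}
  + x^{n/2} = ∑_{l=1}^{n/2} (-1)^{l-1} binom(n-l-1, l-1) x^l y^{n-2l}`. -/
theorem poly_identity_even (n : ℕ) (hn : 2 < n) (hev : Even n) :
    (∑ i ∈ Finset.Icc 1 ((n - 2) / 2), ∑ j ∈ Finset.range ((n - 2 * i) / 2 + 1),
        C ((-1 : ℚ) ^ j * (((n : ℚ) - 2 * i) / ((n : ℚ) - 2 * i - j)) *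
            (Nat.choose (n - 2 * i - j) j : ℚ)) *
          X 0 ^ (i + j) * X 1 ^ (n - 2 * i - 2 * j))
      + X 0 ^ (n / 2)
      = ∑ l ∈ Finset.Icc 1 (n / 2),
          C ((-1 : ℚ) ^ (l - 1) * (Nat.choose (n - l - 1) (l - 1) : ℚ)) *
            (X 0 : MvPolynomial (Fin 2) ℚ) ^ l * X 1 ^ (n - 2 * l) := by
  obtain ⟨M, hM⟩ : ∃ M, n = 2*M + 2 := by
    obtain ⟨k, hk⟩ := hev; exact ⟨k - 1, by omega⟩
  have hM1 : 1 ≤ M := by omega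
  have hI : (n - 2) / 2 = M := by omega
  have hI' : n / 2 = M + 1 := by omega
  set F : ℕ → MvPolynomial (Fin 2) ℚ :=
    fun i => ∑ j ∈ Finset.range ((n - 2*i)/2 + 1), Aa n i j with hF
  -- Step 1: rewrite the double sum using term_split and reindex the subtracted part
  have step1 : (∑ i ∈ Finset.Icc 1 ((n - 2) / 2), ∑ j ∈ Finset.range ((n - 2 * i) / 2 + 1),
        C ((-1 : ℚ) ^ j * (((n : ℚ) - 2 * i) / ((n : ℚ) - 2 * i - j)) *
            (Nat.choose (n - 2 * i - j) j : ℚ)) *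
          X 0 ^ (i + j) * X 1 ^ (n - 2 * i - 2 * j))
      = (∑ i ∈ Finset.Icc 1 M, F i) - ∑ i ∈ Finset.Icc 1 M, F (i + 1) := by
    rw [hI, ← Finset.sum_sub_distrib]
    refine Finset.sum_congr rfl fun i hi => ?_
    obtain ⟨hi1, hi2⟩ := Finset.mem_Icc.mp hi
    have h3 : 2*i + 2 ≤ n := by omega
    have hsplit : ∀ j ∈ Finset.range ((n - 2 * i) / 2 + 1),
        C ((-1 : ℚ) ^ j * (((n : ℚ) - 2 * i) / ((n : ℚ) - 2 * i - j)) *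
            (Nat.choose (n - 2 * i - j) j : ℚ)) *
          X 0 ^ (i + j) * X 1 ^ (n - 2 * i - 2 * j)
        = Aa n i j - (if j = 0 then 0 else Aa n (i+1) (j-1)) := by
      intro j hj
      have hj' : j ≤ (n - 2*i)/2 := Nat.lt_succ_iff.mp (Finset.mem_range.mp hj)
      exact term_split n i j hi1 (by omega) h3
    rw [Finset.sum_congr rfl hsplit, Finset.sum_sub_distrib]
    congr 1
    -- reindex inner subtracted sum: j ↦ j + 1
    have hK : (n - 2*i)/2 = (n - 2*(i+1))/2 + 1 := by omega
    rw [hF]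
    simp only []
    rw [← hK, Finset.sum_range_succ']
    simp
  rw [step1]
  -- Step 2: shift the second sum
  have step2 : ∑ i ∈ Finset.Icc 1 M, F (i + 1) = ∑ i ∈ Finset.Icc 2 (M + 1), F i := by
    rw [← Finset.map_add_right_Icc 1 M 1, Finset.sum_map]
    rfl
  rw [step2]
  -- Step 3: telescoping over i
  have tele1 : ∑ i ∈ Finset.Icc 1 (M + 1), F i = (∑ i ∈ Finset.Icc 1 M, F i) + F (M + 1) := by
    rw [← Finset.sum_Icc_succ_top (by omega)]
  have tele2 : ∑ i ∈ Finset.Icc 1 (M + 1), F i = F 1 + ∑ i ∈ Finset.Icc 2 (M + 1), F i := by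
    have hset : Finset.Icc 1 (M + 1) = insert 1 (Finset.Icc 2 (M + 1)) := by
      ext a; simp [Finset.mem_Icc]; omega
    rw [hset, Finset.sum_insert (by simp)]
  have key : (∑ i ∈ Finset.Icc 1 M, F i) - ∑ i ∈ Finset.Icc 2 (M + 1), F i
      = F 1 - F (M + 1) := by
    linear_combination tele1.symm.trans tele2
  rw [key]
  -- F (M+1) = X 0 ^ (n/2)
  have hFM : F (M + 1) = X 0 ^ (n / 2) := by
    have h0 : n - 2*(M+1) = 0 := by omega
    rw [hF]
    simp only [h0]
    norm_num [Aa, h0, hI']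
  rw [hFM]
  -- F 1 = RHS
  have hF1 : F 1 = ∑ l ∈ Finset.Icc 1 (n / 2),
      C ((-1 : ℚ) ^ (l - 1) * (Nat.choose (n - l - 1) (l - 1) : ℚ)) *
        (X 0 : MvPolynomial (Fin 2) ℚ) ^ l * X 1 ^ (n - 2 * l) := by
    rw [hI', show Finset.Icc 1 (M + 1) = Finset.map (addRightEmbedding 1) (Finset.Icc 0 M) by
      rw [Finset.map_add_right_Icc], Finset.sum_map]
    rw [hF]
    simp only []
    rw [show (n - 2*1)/2 + 1 = M + 1 by omega, Finset.range_eq_Ico,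
      show Finset.Ico 0 (M+1) = Finset.Icc 0 M by rw [Finset.Ico_add_one_right_eq_Icc]]
    refine Finset.sum_congr rfl fun j hj => ?_
    have e1 : addRightEmbedding 1 j = j + 1 := rfl
    rw [e1]
    have e2 : n - 2*1 - j = n - (j+1) - 1 := by omega
    have e3 : 1 + j = j + 1 := by omega
    have e4 : n - 2*1 - 2*j = n - 2*(j+1) := by omega
    have e5 : j + 1 - 1 = j := by omega
    rw [Aa, e2, e3, e4, e5]
  rw [hF1]
  ring
end

section
/- The quotient ring ℤ[x, y, z₊, z₋]/I is generated as a ℤ-module by the set { x̄^i ȳ^j : 0 ≤ i ≤ n−1, 0 ≤ j ≤ 2n−2 } ∪ { x̄^i ȳ^l z̄₊^m : 0 ≤ i ≤ n−1, 0 ≤ l ≤ n−2, m ≥ 1 } ∪ { x̄^i ȳ^l z̄₋^m : 0 ≤ i ≤ n−1, 0 ≤ l ≤ n−2, m ≥ 1 }. -/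
open MvPolynomial

/- We work in `ℤ[x, y, z₊, z₋] = MvPolynomial (Fin 4) ℤ`, with
`x = X 0`, `y = X 1`, `z₊ = X 2`, `z₋ = X 3`.
For an integer `t ≥ 0`, `c(t) = ⌊(t+1)/2⌋`; note `c(n-2) = (n-1)/2` and `c(n-1) = n/2`
in natural-number division. -/

/-- `f₁(x,y) = ∑_{i=0}^{c(n-2)} (-1)^i binom(n-1-i, i) x^i y^{n-1-2i}`. -/
noncomputable def f1 (n : ℕ) : MvPolynomial (Fin 4) ℤ :=
  ∑ i ∈ Finset.range ((n - 1) / 2 + 1),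
    C ((-1 : ℤ) ^ i * (Nat.choose (n - 1 - i) i : ℤ)) * X 0 ^ i * X 1 ^ (n - 1 - 2 * i)

/-- `f₂(x,y) = ∑_{i=0}^{c(n-1)} (-1)^i (n/(n-i)) binom(n-i, i) x^i y^{n-2i} - 2`
(each coefficient `n/(n-i) · binom(n-i, i)` is an integer). -/
noncomputable def f2 (n : ℕ) : MvPolynomial (Fin 4) ℤ :=
  (∑ i ∈ Finset.range (n / 2 + 1),
    C ((-1 : ℤ) ^ i * ((n * Nat.choose (n - i) i / (n - i) : ℕ) : ℤ)) *
      X 0 ^ i * X 1 ^ (n - 2 * i)) - 2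

/-- `f₃(x,y) = ∑_{i=1}^{c(n-2)} (-1)^{i-1} binom(n-i-2, i-1) x^{i+1} y^{n-1-2i}`. -/
noncomputable def f3 (n : ℕ) : MvPolynomial (Fin 4) ℤ :=
  ∑ i ∈ Finset.Icc 1 ((n - 1) / 2),
    C ((-1 : ℤ) ^ (i - 1) * (Nat.choose (n - i - 2) (i - 1) : ℤ)) *
      X 0 ^ (i + 1) * X 1 ^ (n - 1 - 2 * i)

/-- `f₄(x,y) = ∑_{i=1}^{c(n-1)} (-1)^{i-1} binom(n-i-1, i-1) x^i y^{n-2i}`. -/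
noncomputable def f4 (n : ℕ) : MvPolynomial (Fin 4) ℤ :=
  ∑ i ∈ Finset.Icc 1 (n / 2),
    C ((-1 : ℤ) ^ (i - 1) * (Nat.choose (n - i - 1) (i - 1) : ℤ)) *
      X 0 ^ i * X 1 ^ (n - 2 * i)

/-- The ideal `I` of `ℤ[x, y, z₊, z₋]` generated by `x^n - 1`, `f₁f₂`,
`z₊z₋ - 1 - f₁(2y + 4f₃)`, `f₁(z₊ - 1 - 2f₄)` and `f₁(z₊ - z₋)`. -/
noncomputable def idealI (n : ℕ) : Ideal (MvPolynomial (Fin 4) ℤ) :=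
  Ideal.span
    {X 0 ^ n - 1,
     f1 n * f2 n,
     X 2 * X 3 - 1 - f1 n * (2 * X 1 + 4 * f3 n),
     f1 n * (X 2 - 1 - 2 * f4 n),
     f1 n * (X 2 - X 3)}

namespace QSpanAux

/-- Span of monomials `x^i y^j` with `j ≤ D`. -/
noncomputable def SB (D : ℕ) : Submodule ℤ (MvPolynomial (Fin 4) ℤ) :=
  Submodule.span ℤ {p | ∃ i j : ℕ, j ≤ D ∧ p = X 0 ^ i * X 1 ^ j}

lemma mem_SB {j D : ℕ} (i : ℕ) (h : j ≤ D) : (X 0 : MvPolynomial (Fin 4) ℤ) ^ i * X 1 ^ j ∈ SB D :=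
  Submodule.subset_span ⟨i, j, h, rfl⟩

lemma mem_SB_y {j D : ℕ} (h : j ≤ D) : (X 1 : MvPolynomial (Fin 4) ℤ) ^ j ∈ SB D := by
  have := mem_SB (j := j) (D := D) 0 h
  simpa using this

lemma SB_mono {D E : ℕ} (h : D ≤ E) : SB D ≤ SB E :=
  Submodule.span_mono (fun _ ⟨i, j, hj, hp⟩ => ⟨i, j, hj.trans h, hp⟩)

lemma SB_mul {D E : ℕ} {p q : MvPolynomial (Fin 4) ℤ} (hp : p ∈ SB D) (hq : q ∈ SB E) :
    p * q ∈ SB (D + E) := by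
  induction hp using Submodule.span_induction with
  | mem p hp =>
    obtain ⟨i, j, hj, rfl⟩ := hp
    induction hq using Submodule.span_induction with
    | mem q hq =>
      obtain ⟨i', j', hj', rfl⟩ := hq
      have : (X 0 : MvPolynomial (Fin 4) ℤ) ^ i * X 1 ^ j * (X 0 ^ i' * X 1 ^ j')
          = X 0 ^ (i + i') * X 1 ^ (j + j') := by rw [pow_add, pow_add]; ring
      rw [this]
      exact mem_SB _ (by omega)
    | zero => simp only [mul_zero]; exact (SB (D + E)).zero_mem
    | add q r _ _ hq hr => rw [mul_add]; exact (SB (D+E)).add_mem hq hr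
    | smul a q _ hq => rw [mul_smul_comm]; exact (SB (D+E)).smul_mem a hq
  | zero => simp only [zero_mul]; exact (SB (D + E)).zero_mem
  | add p r _ _ hp hr => rw [add_mul]; exact (SB (D+E)).add_mem hp hr
  | smul a p _ hp => rw [smul_mul_assoc]; exact (SB (D+E)).smul_mem a hp

lemma two_mem_SB (D : ℕ) : (2 : MvPolynomial (Fin 4) ℤ) ∈ SB D := by
  have h : (2 : MvPolynomial (Fin 4) ℤ) = (2 : ℤ) • (X 0 ^ 0 * X 1 ^ 0) := by simp
  rw [h]
  exact Submodule.smul_mem _ _ (mem_SB _ (Nat.zero_le _))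

variable {n : ℕ}

lemma hf1 (hn : 2 < n) : f1 n - X 1 ^ (n - 1) ∈ SB (n - 2) := by
  rw [f1, Finset.sum_range_succ']
  have h0 : (C ((-1 : ℤ) ^ 0 * (Nat.choose (n - 1 - 0) 0 : ℤ)) * X 0 ^ 0 * X 1 ^ (n - 1 - 2 * 0)
      : MvPolynomial (Fin 4) ℤ) = X 1 ^ (n - 1) := by simp
  rw [h0, add_sub_cancel_right]
  refine Submodule.sum_mem _ fun i _ => ?_
  have : (C ((-1 : ℤ) ^ (i+1) * (Nat.choose (n - 1 - (i+1)) (i+1) : ℤ)) * X 0 ^ (i+1)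
      * X 1 ^ (n - 1 - 2 * (i+1)) : MvPolynomial (Fin 4) ℤ)
      = ((-1 : ℤ) ^ (i+1) * (Nat.choose (n - 1 - (i+1)) (i+1) : ℤ))
        • (X 0 ^ (i+1) * X 1 ^ (n - 1 - 2 * (i+1))) := by
    rw [smul_eq_C_mul]; ring
  rw [this]
  exact Submodule.smul_mem _ _ (mem_SB _ (by omega))

lemma hf2 (hn : 2 < n) : f2 n - X 1 ^ n ∈ SB (n - 2) := by
  rw [f2, Finset.sum_range_succ']
  have h0 : (C ((-1 : ℤ) ^ 0 * ((n * Nat.choose (n - 0) 0 / (n - 0) : ℕ) : ℤ)) * X 0 ^ 0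
      * X 1 ^ (n - 2 * 0) : MvPolynomial (Fin 4) ℤ) = X 1 ^ n := by
    simp [Nat.div_self (by omega : 0 < n)]
  rw [h0]
  have key : ∀ s : MvPolynomial (Fin 4) ℤ, s + X 1 ^ n - 2 - X 1 ^ n = s - 2 := fun s => by ring
  rw [key]
  refine Submodule.sub_mem _ (Submodule.sum_mem _ fun i _ => ?_) (two_mem_SB _)
  have : (C ((-1 : ℤ) ^ (i+1) * ((n * Nat.choose (n - (i+1)) (i+1) / (n - (i+1)) : ℕ) : ℤ)) * X 0 ^ (i+1)
      * X 1 ^ (n - 2 * (i+1)) : MvPolynomial (Fin 4) ℤ)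
      = ((-1 : ℤ) ^ (i+1) * ((n * Nat.choose (n - (i+1)) (i+1) / (n - (i+1)) : ℕ) : ℤ))
        • (X 0 ^ (i+1) * X 1 ^ (n - 2 * (i+1))) := by
    rw [smul_eq_C_mul]; ring
  rw [this]
  exact Submodule.smul_mem _ _ (mem_SB _ (by omega))

lemma hf3 (hn : 2 < n) : f3 n ∈ SB (n - 2) := by
  rw [f3]
  refine Submodule.sum_mem _ fun i hi => ?_
  rw [Finset.mem_Icc] at hi
  have : (C ((-1 : ℤ) ^ (i-1) * (Nat.choose (n - i - 2) (i-1) : ℤ)) * X 0 ^ (i+1)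
      * X 1 ^ (n - 1 - 2 * i) : MvPolynomial (Fin 4) ℤ)
      = ((-1 : ℤ) ^ (i-1) * (Nat.choose (n - i - 2) (i-1) : ℤ))
        • (X 0 ^ (i+1) * X 1 ^ (n - 1 - 2 * i)) := by
    rw [smul_eq_C_mul]; ring
  rw [this]
  exact Submodule.smul_mem _ _ (mem_SB _ (by omega))

lemma hf4 (hn : 2 < n) : f4 n ∈ SB (n - 2) := by
  rw [f4]
  refine Submodule.sum_mem _ fun i hi => ?_
  rw [Finset.mem_Icc] at hi
  have : (C ((-1 : ℤ) ^ (i-1) * (Nat.choose (n - i - 1) (i-1) : ℤ)) * X 0 ^ i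
      * X 1 ^ (n - 2 * i) : MvPolynomial (Fin 4) ℤ)
      = ((-1 : ℤ) ^ (i-1) * (Nat.choose (n - i - 1) (i-1) : ℤ))
        • (X 0 ^ i * X 1 ^ (n - 2 * i)) := by
    rw [smul_eq_C_mul]; ring
  rw [this]
  exact Submodule.smul_mem _ _ (mem_SB _ (by omega))

lemma hf1' (hn : 2 < n) : f1 n ∈ SB (n - 1) := by
  have := (SB (n-1)).add_mem ((SB_mono (by omega)) (hf1 hn)) (mem_SB_y (le_refl (n-1)))
  simpa using this

lemma hf2' (hn : 2 < n) : f2 n ∈ SB n := by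
  have := (SB n).add_mem ((SB_mono (by omega)) (hf2 hn)) (mem_SB_y (le_refl n))
  simpa using this

lemma key1 (hn : 2 < n) : (X 1 : MvPolynomial (Fin 4) ℤ) ^ (2*n-1) - f1 n * f2 n ∈ SB (2*n-2) := by
  have hsplit : (X 1 : MvPolynomial (Fin 4) ℤ) ^ (2*n-1) = X 1 ^ (n-1) * X 1 ^ n := by
    rw [← pow_add]; congr 1; omega
  have h : (X 1 : MvPolynomial (Fin 4) ℤ) ^ (2*n-1) - f1 n * f2 n
      = -((f1 n - X 1 ^ (n-1)) * f2 n + X 1 ^ (n-1) * (f2 n - X 1 ^ n)) := by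
    rw [hsplit]; ring
  rw [h]
  refine Submodule.neg_mem _ (Submodule.add_mem _ ?_ ?_)
  · exact SB_mono (by omega) (SB_mul (hf1 hn) (hf2' hn))
  · exact SB_mono (by omega) (SB_mul (mem_SB_y (le_refl (n-1))) (hf2 hn))

lemma one_mem_SB (D : ℕ) : (1 : MvPolynomial (Fin 4) ℤ) ∈ SB D := by
  have h : (1 : MvPolynomial (Fin 4) ℤ) = X 0 ^ 0 * X 1 ^ 0 := by simp
  rw [h]; exact mem_SB _ (Nat.zero_le _)

lemma gxy_mem (hn : 2 < n) : f1 n * (1 + 2 * f4 n) ∈ SB (2*n-2) := by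
  refine SB_mono (by omega : (n-1) + (n-2) ≤ 2*n-2) (SB_mul (hf1' hn) ?_)
  refine Submodule.add_mem _ (one_mem_SB _) ?_
  have h : (2 : MvPolynomial (Fin 4) ℤ) * f4 n = (2 : ℤ) • f4 n := by
    rw [smul_eq_C_mul]; norm_num
  rw [h]; exact Submodule.smul_mem _ _ (hf4 hn)

lemma hxy_mem (hn : 2 < n) : (1 : MvPolynomial (Fin 4) ℤ) + f1 n * (2 * X 1 + 4 * f3 n)
    ∈ SB (2*n-2) := by
  refine Submodule.add_mem _ (one_mem_SB _) ?_
  refine SB_mono (by omega : (n-1) + (n-2) ≤ 2*n-2) (SB_mul (hf1' hn) ?_)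
  refine Submodule.add_mem _ ?_ ?_
  · have h : (2 : MvPolynomial (Fin 4) ℤ) * X 1 = (2 : ℤ) • (X 0 ^ 0 * X 1 ^ 1) := by
      rw [smul_eq_C_mul]; norm_num
    rw [h]; exact Submodule.smul_mem _ _ (mem_SB _ (by omega))
  · have h : (4 : MvPolynomial (Fin 4) ℤ) * f3 n = (4 : ℤ) • f3 n := by
      rw [smul_eq_C_mul]; norm_num
    rw [h]; exact Submodule.smul_mem _ _ (hf3 hn)

/-- The target span. -/
noncomputable def T (n : ℕ) : Submodule ℤ (MvPolynomial (Fin 4) ℤ ⧸ idealI n) :=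
  Submodule.span ℤ
      (({q | ∃ i j : ℕ, i ≤ n - 1 ∧ j ≤ 2 * n - 2 ∧
          q = Ideal.Quotient.mk (idealI n) (X 0 ^ i * X 1 ^ j)} ∪
        {q | ∃ i l m : ℕ, i ≤ n - 1 ∧ l ≤ n - 2 ∧ 1 ≤ m ∧
          q = Ideal.Quotient.mk (idealI n) (X 0 ^ i * X 1 ^ l * X 2 ^ m)} ∪
        {q | ∃ i l m : ℕ, i ≤ n - 1 ∧ l ≤ n - 2 ∧ 1 ≤ m ∧
          q = Ideal.Quotient.mk (idealI n) (X 0 ^ i * X 1 ^ l * X 3 ^ m)} :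
        Set (MvPolynomial (Fin 4) ℤ ⧸ idealI n)))

lemma gen1 {i j : ℕ} (hi : i ≤ n - 1) (hj : j ≤ 2*n - 2) :
    Ideal.Quotient.mk (idealI n) (X 0 ^ i * X 1 ^ j) ∈ T n :=
  Submodule.subset_span (Set.mem_union_left _ (Set.mem_union_left _ ⟨i, j, hi, hj, rfl⟩))

lemma gen2 {i l m : ℕ} (hi : i ≤ n - 1) (hl : l ≤ n - 2) (hm : 1 ≤ m) :
    Ideal.Quotient.mk (idealI n) (X 0 ^ i * X 1 ^ l * X 2 ^ m) ∈ T n :=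
  Submodule.subset_span (Set.mem_union_left _ (Set.mem_union_right _ ⟨i, l, m, hi, hl, hm, rfl⟩))

lemma gen3 {i l m : ℕ} (hi : i ≤ n - 1) (hl : l ≤ n - 2) (hm : 1 ≤ m) :
    Ideal.Quotient.mk (idealI n) (X 0 ^ i * X 1 ^ l * X 3 ^ m) ∈ T n :=
  Submodule.subset_span (Set.mem_union_right _ ⟨i, l, m, hi, hl, hm, rfl⟩)

lemma memI1 : (X 0 ^ n - 1 : MvPolynomial (Fin 4) ℤ) ∈ idealI n :=
  Ideal.subset_span (by left; rfl)

lemma memI2 : f1 n * f2 n ∈ idealI n :=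
  Ideal.subset_span (by right; left; rfl)

lemma memI3 : (X 2 * X 3 - 1 - f1 n * (2 * X 1 + 4 * f3 n) : MvPolynomial (Fin 4) ℤ) ∈ idealI n :=
  Ideal.subset_span (by right; right; left; rfl)

lemma memI4 : f1 n * (X 2 - 1 - 2 * f4 n) ∈ idealI n :=
  Ideal.subset_span (by right; right; right; left; rfl)

lemma memI5 : f1 n * (X 2 - X 3) ∈ idealI n :=
  Ideal.subset_span (by right; right; right; right; rfl)

/-- Workhorse: if `p ∈ SB D` and multiplying `q` with every monomial `x^i y^j` with `j ≤ D`
lands in `T n`, then `q * p` lands in `T n`. -/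
lemma reduce {D : ℕ} {p : MvPolynomial (Fin 4) ℤ} (q : MvPolynomial (Fin 4) ℤ) (hp : p ∈ SB D)
    (H : ∀ i j : ℕ, j ≤ D → Ideal.Quotient.mk (idealI n) (q * (X 0 ^ i * X 1 ^ j)) ∈ T n) :
    Ideal.Quotient.mk (idealI n) (q * p) ∈ T n := by
  induction hp using Submodule.span_induction with
  | mem p hp => obtain ⟨i, j, hj, rfl⟩ := hp; exact H i j hj
  | zero => rw [mul_zero, map_zero]; exact (T n).zero_mem
  | add x y _ _ hx hy => rw [mul_add, map_add]; exact (T n).add_mem hx hy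
  | smul a x _ hx =>
    rw [mul_smul_comm, map_zsmul]; exact (T n).smul_mem a hx

lemma pure (hn : 2 < n) : ∀ b a : ℕ,
    Ideal.Quotient.mk (idealI n) ((X 0 : MvPolynomial (Fin 4) ℤ) ^ a * X 1 ^ b) ∈ T n := by
  intro b
  induction b using Nat.strong_induction_on with
  | _ b ihb =>
  intro a
  induction a using Nat.strong_induction_on with
  | _ a iha =>
  by_cases hb : b ≤ 2*n - 2
  · by_cases ha : a ≤ n - 1
    · exact gen1 ha hb
    · have hxa : (X 0 : MvPolynomial (Fin 4) ℤ) ^ a = X 0 ^ n * X 0 ^ (a - n) := by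
        rw [← pow_add]; congr 1; omega
      have heq : Ideal.Quotient.mk (idealI n) ((X 0 : MvPolynomial (Fin 4) ℤ) ^ a * X 1 ^ b)
          = Ideal.Quotient.mk (idealI n) (X 0 ^ (a - n) * X 1 ^ b) := by
        apply Ideal.Quotient.eq.mpr
        have h2 : (X 0 : MvPolynomial (Fin 4) ℤ) ^ a * X 1 ^ b - X 0 ^ (a - n) * X 1 ^ b
            = (X 0 ^ n - 1) * (X 0 ^ (a - n) * X 1 ^ b) := by rw [hxa]; ring
        rw [h2]; exact Ideal.mul_mem_right _ _ memI1
      rw [heq]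
      exact iha (a - n) (by omega)
  · have hy : (X 1 : MvPolynomial (Fin 4) ℤ) ^ b = X 1 ^ (b - (2*n-1)) * X 1 ^ (2*n-1) := by
      rw [← pow_add]; congr 1; omega
    have heq : Ideal.Quotient.mk (idealI n) ((X 0 : MvPolynomial (Fin 4) ℤ) ^ a * X 1 ^ b)
        = Ideal.Quotient.mk (idealI n)
            ((X 0 ^ a * X 1 ^ (b - (2*n-1))) * (X 1 ^ (2*n-1) - f1 n * f2 n)) := by
      apply Ideal.Quotient.eq.mpr
      have h2 : (X 0 : MvPolynomial (Fin 4) ℤ) ^ a * X 1 ^ b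
          - (X 0 ^ a * X 1 ^ (b - (2*n-1))) * (X 1 ^ (2*n-1) - f1 n * f2 n)
          = (f1 n * f2 n) * (X 0 ^ a * X 1 ^ (b - (2*n-1))) := by rw [hy]; ring
      rw [h2]; exact Ideal.mul_mem_right _ _ memI2
    rw [heq]
    refine reduce _ (key1 hn) fun i j hj => ?_
    have h3 : (X 0 : MvPolynomial (Fin 4) ℤ) ^ a * X 1 ^ (b - (2*n-1)) * (X 0 ^ i * X 1 ^ j)
        = X 0 ^ (a + i) * X 1 ^ (b - (2*n-1) + j) := by rw [pow_add, pow_add]; ring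
    rw [h3]
    exact ihb _ (by omega) _

lemma zp (hn : 2 < n) : ∀ m b a : ℕ,
    Ideal.Quotient.mk (idealI n) ((X 0 : MvPolynomial (Fin 4) ℤ) ^ a * X 1 ^ b * X 2 ^ m)
      ∈ T n := by
  intro m
  induction m with
  | zero => intro b a; simp only [pow_zero, mul_one]; exact pure hn b a
  | succ m ihm =>
    intro b
    induction b using Nat.strong_induction_on with
    | _ b ihb =>
    intro a
    induction a using Nat.strong_induction_on with
    | _ a iha =>
    by_cases hb : b ≤ n - 2
    · by_cases ha : a ≤ n - 1
      · exact gen2 ha hb (by omega)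
      · have hxa : (X 0 : MvPolynomial (Fin 4) ℤ) ^ a = X 0 ^ n * X 0 ^ (a - n) := by
          rw [← pow_add]; congr 1; omega
        have heq : Ideal.Quotient.mk (idealI n)
              ((X 0 : MvPolynomial (Fin 4) ℤ) ^ a * X 1 ^ b * X 2 ^ (m+1))
            = Ideal.Quotient.mk (idealI n) (X 0 ^ (a - n) * X 1 ^ b * X 2 ^ (m+1)) := by
          apply Ideal.Quotient.eq.mpr
          have h2 : (X 0 : MvPolynomial (Fin 4) ℤ) ^ a * X 1 ^ b * X 2 ^ (m+1)
              - X 0 ^ (a - n) * X 1 ^ b * X 2 ^ (m+1)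
              = (X 0 ^ n - 1) * (X 0 ^ (a - n) * X 1 ^ b * X 2 ^ (m+1)) := by rw [hxa]; ring
          rw [h2]; exact Ideal.mul_mem_right _ _ memI1
        rw [heq]
        exact iha (a - n) (by omega)
    · have hy : (X 1 : MvPolynomial (Fin 4) ℤ) ^ b = X 1 ^ (b - (n-1)) * X 1 ^ (n-1) := by
        rw [← pow_add]; congr 1; omega
      have heq : Ideal.Quotient.mk (idealI n)
            ((X 0 : MvPolynomial (Fin 4) ℤ) ^ a * X 1 ^ b * X 2 ^ (m+1))
          = Ideal.Quotient.mk (idealI n)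
              ((X 0 ^ a * X 1 ^ (b - (n-1)) * X 2 ^ (m+1)) * (X 1 ^ (n-1) - f1 n))
          + Ideal.Quotient.mk (idealI n)
              ((X 0 ^ a * X 1 ^ (b - (n-1)) * X 2 ^ m) * (f1 n * (1 + 2 * f4 n))) := by
        rw [← map_add]
        apply Ideal.Quotient.eq.mpr
        have h2 : (X 0 : MvPolynomial (Fin 4) ℤ) ^ a * X 1 ^ b * X 2 ^ (m+1)
            - ((X 0 ^ a * X 1 ^ (b - (n-1)) * X 2 ^ (m+1)) * (X 1 ^ (n-1) - f1 n)
              + (X 0 ^ a * X 1 ^ (b - (n-1)) * X 2 ^ m) * (f1 n * (1 + 2 * f4 n)))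
            = (f1 n * (X 2 - 1 - 2 * f4 n)) * (X 0 ^ a * X 1 ^ (b - (n-1)) * X 2 ^ m) := by
          rw [hy]; ring
        rw [h2]; exact Ideal.mul_mem_right _ _ memI4
      rw [heq]
      refine (T n).add_mem ?_ ?_
      · have hmem : (X 1 : MvPolynomial (Fin 4) ℤ) ^ (n-1) - f1 n ∈ SB (n-2) := by
          have := Submodule.neg_mem _ (hf1 hn)
          simpa using this
        refine reduce _ hmem fun i j hj => ?_
        have h3 : (X 0 : MvPolynomial (Fin 4) ℤ) ^ a * X 1 ^ (b - (n-1)) * X 2 ^ (m+1)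
              * (X 0 ^ i * X 1 ^ j)
            = X 0 ^ (a + i) * X 1 ^ (b - (n-1) + j) * X 2 ^ (m+1) := by
          rw [pow_add, pow_add]; ring
        rw [h3]
        exact ihb _ (by omega) _
      · refine reduce _ (gxy_mem hn) fun i j hj => ?_
        have h3 : (X 0 : MvPolynomial (Fin 4) ℤ) ^ a * X 1 ^ (b - (n-1)) * X 2 ^ m
              * (X 0 ^ i * X 1 ^ j)
            = X 0 ^ (a + i) * X 1 ^ (b - (n-1) + j) * X 2 ^ m := by
          rw [pow_add, pow_add]; ring
        rw [h3]
        exact ihm _ _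

lemma zm (hn : 2 < n) : ∀ m b a : ℕ,
    Ideal.Quotient.mk (idealI n) ((X 0 : MvPolynomial (Fin 4) ℤ) ^ a * X 1 ^ b * X 3 ^ m)
      ∈ T n := by
  intro m
  induction m with
  | zero => intro b a; simp only [pow_zero, mul_one]; exact pure hn b a
  | succ m ihm =>
    intro b
    induction b using Nat.strong_induction_on with
    | _ b ihb =>
    intro a
    induction a using Nat.strong_induction_on with
    | _ a iha =>
    by_cases hb : b ≤ n - 2
    · by_cases ha : a ≤ n - 1
      · exact gen3 ha hb (by omega)
      · have hxa : (X 0 : MvPolynomial (Fin 4) ℤ) ^ a = X 0 ^ n * X 0 ^ (a - n) := by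
          rw [← pow_add]; congr 1; omega
        have heq : Ideal.Quotient.mk (idealI n)
              ((X 0 : MvPolynomial (Fin 4) ℤ) ^ a * X 1 ^ b * X 3 ^ (m+1))
            = Ideal.Quotient.mk (idealI n) (X 0 ^ (a - n) * X 1 ^ b * X 3 ^ (m+1)) := by
          apply Ideal.Quotient.eq.mpr
          have h2 : (X 0 : MvPolynomial (Fin 4) ℤ) ^ a * X 1 ^ b * X 3 ^ (m+1)
              - X 0 ^ (a - n) * X 1 ^ b * X 3 ^ (m+1)
              = (X 0 ^ n - 1) * (X 0 ^ (a - n) * X 1 ^ b * X 3 ^ (m+1)) := by rw [hxa]; ring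
          rw [h2]; exact Ideal.mul_mem_right _ _ memI1
        rw [heq]
        exact iha (a - n) (by omega)
    · have hy : (X 1 : MvPolynomial (Fin 4) ℤ) ^ b = X 1 ^ (b - (n-1)) * X 1 ^ (n-1) := by
        rw [← pow_add]; congr 1; omega
      have heq : Ideal.Quotient.mk (idealI n)
            ((X 0 : MvPolynomial (Fin 4) ℤ) ^ a * X 1 ^ b * X 3 ^ (m+1))
          = Ideal.Quotient.mk (idealI n)
              ((X 0 ^ a * X 1 ^ (b - (n-1)) * X 3 ^ (m+1)) * (X 1 ^ (n-1) - f1 n))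
          + Ideal.Quotient.mk (idealI n)
              ((X 0 ^ a * X 1 ^ (b - (n-1)) * X 3 ^ m) * (f1 n * (1 + 2 * f4 n))) := by
        rw [← map_add]
        apply Ideal.Quotient.eq.mpr
        have h2 : (X 0 : MvPolynomial (Fin 4) ℤ) ^ a * X 1 ^ b * X 3 ^ (m+1)
            - ((X 0 ^ a * X 1 ^ (b - (n-1)) * X 3 ^ (m+1)) * (X 1 ^ (n-1) - f1 n)
              + (X 0 ^ a * X 1 ^ (b - (n-1)) * X 3 ^ m) * (f1 n * (1 + 2 * f4 n)))
            = (f1 n * (X 2 - 1 - 2 * f4 n)) * (X 0 ^ a * X 1 ^ (b - (n-1)) * X 3 ^ m)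
              - (f1 n * (X 2 - X 3)) * (X 0 ^ a * X 1 ^ (b - (n-1)) * X 3 ^ m) := by
          rw [hy]; ring
        rw [h2]
        exact Ideal.sub_mem _ (Ideal.mul_mem_right _ _ memI4) (Ideal.mul_mem_right _ _ memI5)
      rw [heq]
      refine (T n).add_mem ?_ ?_
      · have hmem : (X 1 : MvPolynomial (Fin 4) ℤ) ^ (n-1) - f1 n ∈ SB (n-2) := by
          have := Submodule.neg_mem _ (hf1 hn)
          simpa using this
        refine reduce _ hmem fun i j hj => ?_
        have h3 : (X 0 : MvPolynomial (Fin 4) ℤ) ^ a * X 1 ^ (b - (n-1)) * X 3 ^ (m+1)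
              * (X 0 ^ i * X 1 ^ j)
            = X 0 ^ (a + i) * X 1 ^ (b - (n-1) + j) * X 3 ^ (m+1) := by
          rw [pow_add, pow_add]; ring
        rw [h3]
        exact ihb _ (by omega) _
      · refine reduce _ (gxy_mem hn) fun i j hj => ?_
        have h3 : (X 0 : MvPolynomial (Fin 4) ℤ) ^ a * X 1 ^ (b - (n-1)) * X 3 ^ m
              * (X 0 ^ i * X 1 ^ j)
            = X 0 ^ (a + i) * X 1 ^ (b - (n-1) + j) * X 3 ^ m := by
          rw [pow_add, pow_add]; ring
        rw [h3]
        exact ihm _ _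

lemma full (hn : 2 < n) : ∀ d c b a : ℕ,
    Ideal.Quotient.mk (idealI n)
      ((X 0 : MvPolynomial (Fin 4) ℤ) ^ a * X 1 ^ b * X 2 ^ c * X 3 ^ d) ∈ T n := by
  intro d
  induction d with
  | zero => intro c b a; simp only [pow_zero, mul_one]; exact zp hn c b a
  | succ d ihd =>
    intro c b a
    cases c with
    | zero => simp only [pow_zero, mul_one]; exact zm hn (d+1) b a
    | succ c =>
      have heq : Ideal.Quotient.mk (idealI n)
            ((X 0 : MvPolynomial (Fin 4) ℤ) ^ a * X 1 ^ b * X 2 ^ (c+1) * X 3 ^ (d+1))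
          = Ideal.Quotient.mk (idealI n)
              ((X 0 ^ a * X 1 ^ b * X 2 ^ c * X 3 ^ d)
                * (1 + f1 n * (2 * X 1 + 4 * f3 n))) := by
        apply Ideal.Quotient.eq.mpr
        have h2 : (X 0 : MvPolynomial (Fin 4) ℤ) ^ a * X 1 ^ b * X 2 ^ (c+1) * X 3 ^ (d+1)
            - (X 0 ^ a * X 1 ^ b * X 2 ^ c * X 3 ^ d) * (1 + f1 n * (2 * X 1 + 4 * f3 n))
            = (X 2 * X 3 - 1 - f1 n * (2 * X 1 + 4 * f3 n))
              * (X 0 ^ a * X 1 ^ b * X 2 ^ c * X 3 ^ d) := by ring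
        rw [h2]; exact Ideal.mul_mem_right _ _ memI3
      rw [heq]
      refine reduce _ (hxy_mem hn) fun i j hj => ?_
      have h3 : (X 0 : MvPolynomial (Fin 4) ℤ) ^ a * X 1 ^ b * X 2 ^ c * X 3 ^ d
            * (X 0 ^ i * X 1 ^ j)
          = X 0 ^ (a + i) * X 1 ^ (b + j) * X 2 ^ c * X 3 ^ d := by
        rw [pow_add, pow_add]; ring
      rw [h3]
      exact ihd c _ _

lemma mul_X_mem (hn : 2 < n) (v : MvPolynomial (Fin 4) ℤ ⧸ idealI n) (hv : v ∈ T n)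
    (k : Fin 4) : v * Ideal.Quotient.mk (idealI n) (X k) ∈ T n := by
  induction hv using Submodule.span_induction with
  | mem x hx =>
    have hform : ∃ a b c d : ℕ, x = Ideal.Quotient.mk (idealI n)
        ((X 0 : MvPolynomial (Fin 4) ℤ) ^ a * X 1 ^ b * X 2 ^ c * X 3 ^ d) := by
      rcases hx with (⟨i, j, _, _, rfl⟩ | ⟨i, l, m, _, _, _, rfl⟩) | ⟨i, l, m, _, _, _, rfl⟩
      · exact ⟨i, j, 0, 0, by simp⟩
      · exact ⟨i, l, m, 0, by simp⟩
      · exact ⟨i, l, 0, m, by rw [pow_zero, mul_one]⟩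
    obtain ⟨a, b, c, d, rfl⟩ := hform
    rw [← map_mul]
    fin_cases k
    · show Ideal.Quotient.mk (idealI n)
          ((X 0 : MvPolynomial (Fin 4) ℤ) ^ a * X 1 ^ b * X 2 ^ c * X 3 ^ d * X 0) ∈ T n
      have h : (X 0 : MvPolynomial (Fin 4) ℤ) ^ a * X 1 ^ b * X 2 ^ c * X 3 ^ d * X 0
          = X 0 ^ (a+1) * X 1 ^ b * X 2 ^ c * X 3 ^ d := by ring
      rw [h]; exact full hn d c b (a+1)
    · show Ideal.Quotient.mk (idealI n)
          ((X 0 : MvPolynomial (Fin 4) ℤ) ^ a * X 1 ^ b * X 2 ^ c * X 3 ^ d * X 1) ∈ T n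
      have h : (X 0 : MvPolynomial (Fin 4) ℤ) ^ a * X 1 ^ b * X 2 ^ c * X 3 ^ d * X 1
          = X 0 ^ a * X 1 ^ (b+1) * X 2 ^ c * X 3 ^ d := by ring
      rw [h]; exact full hn d c (b+1) a
    · show Ideal.Quotient.mk (idealI n)
          ((X 0 : MvPolynomial (Fin 4) ℤ) ^ a * X 1 ^ b * X 2 ^ c * X 3 ^ d * X 2) ∈ T n
      have h : (X 0 : MvPolynomial (Fin 4) ℤ) ^ a * X 1 ^ b * X 2 ^ c * X 3 ^ d * X 2
          = X 0 ^ a * X 1 ^ b * X 2 ^ (c+1) * X 3 ^ d := by ring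
      rw [h]; exact full hn d (c+1) b a
    · show Ideal.Quotient.mk (idealI n)
          ((X 0 : MvPolynomial (Fin 4) ℤ) ^ a * X 1 ^ b * X 2 ^ c * X 3 ^ d * X 3) ∈ T n
      have h : (X 0 : MvPolynomial (Fin 4) ℤ) ^ a * X 1 ^ b * X 2 ^ c * X 3 ^ d * X 3
          = X 0 ^ a * X 1 ^ b * X 2 ^ c * X 3 ^ (d+1) := by ring
      rw [h]; exact full hn (d+1) c b a
  | zero => rw [zero_mul]; exact (T n).zero_mem
  | add x y _ _ hx hy => rw [add_mul]; exact (T n).add_mem hx hy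
  | smul a x _ hx => rw [smul_mul_assoc]; exact (T n).smul_mem a hx

lemma allmk (hn : 2 < n) (p : MvPolynomial (Fin 4) ℤ) :
    Ideal.Quotient.mk (idealI n) p ∈ T n := by
  induction p using MvPolynomial.induction_on with
  | C a =>
    have h : (C a : MvPolynomial (Fin 4) ℤ) = a • (X 0 ^ 0 * X 1 ^ 0) := by
      rw [smul_eq_C_mul]; simp
    rw [h, map_zsmul]
    exact (T n).smul_mem a (pure hn 0 0)
  | add p q hp hq => rw [map_add]; exact (T n).add_mem hp hq
  | mul_X p k hp => rw [map_mul]; exact mul_X_mem hn _ hp k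

lemma span_eq_top (hn : 2 < n) : T n = ⊤ := by
  rw [Submodule.eq_top_iff']
  intro q
  obtain ⟨p, rfl⟩ := Ideal.Quotient.mk_surjective q
  exact allmk hn p

end QSpanAux
/-- (From the proof of Proposition 3.9.) The quotient ring `ℤ[x, y, z₊, z₋]/I` is generated,
as a `ℤ`-module, by
`{x̄^i ȳ^j | 0 ≤ i ≤ n-1, 0 ≤ j ≤ 2n-2} ∪ {x̄^i ȳ^l z̄₊^m, x̄^i ȳ^l z̄₋^m |
  0 ≤ i ≤ n-1, 0 ≤ l ≤ n-2, m ≥ 1}`. -/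
theorem quotient_spanned (n : ℕ) (hn : 2 < n) :
    Submodule.span ℤ
      (({q | ∃ i j : ℕ, i ≤ n - 1 ∧ j ≤ 2 * n - 2 ∧
          q = Ideal.Quotient.mk (idealI n) (X 0 ^ i * X 1 ^ j)} ∪
        {q | ∃ i l m : ℕ, i ≤ n - 1 ∧ l ≤ n - 2 ∧ 1 ≤ m ∧
          q = Ideal.Quotient.mk (idealI n) (X 0 ^ i * X 1 ^ l * X 2 ^ m)} ∪
        {q | ∃ i l m : ℕ, i ≤ n - 1 ∧ l ≤ n - 2 ∧ 1 ≤ m ∧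
          q = Ideal.Quotient.mk (idealI n) (X 0 ^ i * X 1 ^ l * X 3 ^ m)} :
        Set (MvPolynomial (Fin 4) ℤ ⧸ idealI n))) = ⊤ := by
  exact QSpanAux.span_eq_top hn
end
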